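/- There exist λ ∈ ℝ and u ∈ ℝ^n such that u > 0 entrywise, ‖u‖ = 1, and 𝒜(u)u = λu; that is, the nonlinear algebraic eigenvalue problem A u + Γ·diag(1 − 1/(a_i + u_i²))·u = λu, u^T u = 1, has a positive solution. -/

import Mathlib

open Matrix Finset

noncomputable def eucNorm {n : ℕ} (u : Fin n → ℝ) : ℝ := Real.sqrt (∑ i, u i ^ 2)

def IsZMatrix {n : ℕ} (B : Matrix (Fin n) (Fin n) ℝ) : Prop :=
  ∀ i j, i ≠ j → B i j ≤ 0

def IsIrreducibleMat {n : ℕ} (B : Matrix (Fin n) (Fin n) ℝ) : Prop :=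
  ¬ ∃ S : Finset (Fin n), S.Nonempty ∧ S ≠ Finset.univ ∧
    ∀ i ∈ S, ∀ j ∉ S, B i j = 0

def IsNonsingularM {n : ℕ} (B : Matrix (Fin n) (Fin n) ℝ) : Prop :=
  IsZMatrix B ∧ IsUnit B ∧ ∀ i j, 0 ≤ B⁻¹ i j

noncomputable def calA {n : ℕ} (A : Matrix (Fin n) (Fin n) ℝ) (Γ : ℝ) (a : Fin n → ℝ)
    (u : Fin n → ℝ) : Matrix (Fin n) (Fin n) ℝ :=
  A + Γ • Matrix.diagonal (fun i => 1 - 1 / (a i + u i ^ 2))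

noncomputable def rvec {n : ℕ} (A : Matrix (Fin n) (Fin n) ℝ) (Γ : ℝ) (a : Fin n → ℝ)
    (u : Fin n → ℝ) (lam : ℝ) : Fin n → ℝ :=
  calA A Γ a u *ᵥ u - lam • u

noncomputable def Jmat {n : ℕ} (A : Matrix (Fin n) (Fin n) ℝ) (Γ : ℝ) (a : Fin n → ℝ)
    (u : Fin n → ℝ) (lam : ℝ) : Matrix (Fin n) (Fin n) ℝ :=
  A + (Γ - lam) • (1 : Matrix (Fin n) (Fin n) ℝ)
    - Γ • Matrix.diagonal (fun i => (a i - u i ^ 2) / (a i + u i ^ 2) ^ 2)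

noncomputable def lamOf {n : ℕ} [NeZero n] (A : Matrix (Fin n) (Fin n) ℝ) (Γ : ℝ)
    (a : Fin n → ℝ) (u : Fin n → ℝ) : ℝ :=
  ⨅ i, (calA A Γ a u *ᵥ u) i / u i

def NewtonSystem {n : ℕ} (A : Matrix (Fin n) (Fin n) ℝ) (Γ : ℝ) (a : Fin n → ℝ)
    (u : Fin n → ℝ) (lam : ℝ) (Δ : Fin n → ℝ) (δ : ℝ) : Prop :=
  Jmat A Γ a u lam *ᵥ Δ - δ • u = -rvec A Γ a u lam ∧
  -(u ⬝ᵥ Δ) = -(1/2 * (u ⬝ᵥ u - 1))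

set_option linter.unusedSectionVars false

section dev
variable {n : ℕ} [NeZero n] (A : Matrix (Fin n) (Fin n) ℝ) (Γ : ℝ) (a : Fin n → ℝ)

noncomputable def phi (u : Fin n → ℝ) (i : Fin n) : ℝ :=
  (A *ᵥ u) i + Γ * ((1 - 1 / (a i + u i ^ 2)) * u i)

lemma calA_mulVec (u : Fin n → ℝ) (i : Fin n) :
    (calA A Γ a u *ᵥ u) i = phi A Γ a u i := by
  simp [calA, Matrix.add_mulVec, Matrix.smul_mulVec, phi,
    Matrix.mulVec_diagonal, Pi.add_apply, Pi.smul_apply, smul_eq_mul]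

noncomputable def ratio (u : Fin n → ℝ) (i : Fin n) : ℝ := phi A Γ a u i / u i

lemma lamOf_eq (u : Fin n → ℝ) : lamOf A Γ a u = ⨅ i, ratio A Γ a u i := by
  unfold lamOf
  congr 1; funext i; rw [calA_mulVec]; rfl

lemma lamOf_le (u : Fin n → ℝ) (i : Fin n) : lamOf A Γ a u ≤ ratio A Γ a u i := by
  rw [lamOf_eq]
  exact ciInf_le (Set.Finite.bddBelow (Set.finite_range _)) i

lemma le_lamOf (u : Fin n → ℝ) (c : ℝ) (h : ∀ i, c ≤ ratio A Γ a u i) :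
    c ≤ lamOf A Γ a u := by
  rw [lamOf_eq]; exact le_ciInf h

lemma lamOf_attained (u : Fin n → ℝ) : ∃ i, lamOf A Γ a u = ratio A Γ a u i := by
  obtain ⟨i, hi⟩ := Finite.exists_min (ratio A Γ a u)
  exact ⟨i, le_antisymm (lamOf_le A Γ a u i) (le_lamOf A Γ a u _ hi)⟩

lemma ratio_smul (u : Fin n → ℝ) (t : ℝ) (ht : 0 < t) (i : Fin n) (hu : 0 < u i) :
    ratio A Γ a (t • u) i = (A *ᵥ u) i / u i + Γ * (1 - 1 / (a i + (t * u i) ^ 2)) := by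
  have h1 : A *ᵥ (t • u) = t • (A *ᵥ u) := Matrix.mulVec_smul A t u
  unfold ratio phi
  rw [h1]
  simp only [Pi.smul_apply, smul_eq_mul]
  rw [show (t * u i) ^ 2 = t ^ 2 * u i ^ 2 by ring]
  set c : ℝ := 1 - 1 / (a i + t ^ 2 * u i ^ 2) with hc
  have hu' : u i ≠ 0 := ne_of_gt hu
  have ht' : t ≠ 0 := ne_of_gt ht
  field_simp

lemma lamOf_smul_lt (ha : ∀ i, 0 < a i) (hΓ : 0 < Γ) (u : Fin n → ℝ)
    (hu : ∀ i, 0 < u i) (t : ℝ) (ht : 1 < t) :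
    lamOf A Γ a u < lamOf A Γ a (t • u) := by
  obtain ⟨i, hi⟩ := lamOf_attained A Γ a (t • u)
  rw [hi, ratio_smul A Γ a u t (lt_trans one_pos ht) i (hu i)]
  have h2 : ratio A Γ a u i = (A *ᵥ u) i / u i + Γ * (1 - 1 / (a i + (1 * u i) ^ 2)) := by
    have := ratio_smul A Γ a u 1 one_pos i (hu i)
    rwa [one_smul] at this
  calc lamOf A Γ a u ≤ ratio A Γ a u i := lamOf_le A Γ a u i
    _ < _ := by
        rw [h2]
        have hai := ha i
        have hden1 : (0:ℝ) < a i + (1 * u i) ^ 2 := by positivity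
        have hden2 : (0:ℝ) < a i + (t * u i) ^ 2 := by positivity
        have hlt : a i + (1 * u i) ^ 2 < a i + (t * u i) ^ 2 := by
          have : (1 * u i) ^ 2 < (t * u i) ^ 2 := by
            have h1 : 1 * u i < t * u i := by
              have := mul_lt_mul_of_pos_right ht (hu i)
              linarith
            nlinarith [hu i]
          linarith
        have : 1 / (a i + (t * u i) ^ 2) < 1 / (a i + (1 * u i) ^ 2) :=
          one_div_lt_one_div_of_lt hden1 hlt
        have := mul_lt_mul_of_pos_left (by linarith : (1:ℝ) - 1 / (a i + (1*u i)^2) < 1 - 1 / (a i + (t*u i)^2)) hΓ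
        linarith

lemma eucNorm_nonneg' (u : Fin n → ℝ) : 0 ≤ eucNorm u := Real.sqrt_nonneg _

lemma eucNorm_eq_one_iff (u : Fin n → ℝ) : eucNorm u = 1 ↔ ∑ i, u i ^ 2 = 1 := by
  rw [eucNorm, Real.sqrt_eq_one]

lemma eucNorm_smul (t : ℝ) (ht : 0 ≤ t) (u : Fin n → ℝ) : eucNorm (t • u) = t * eucNorm u := by
  unfold eucNorm
  rw [show ∑ i, (t • u) i ^ 2 = t ^ 2 * ∑ i, u i ^ 2 by
    rw [Finset.mul_sum]; congr 1; funext i; simp [smul_eq_mul]; ring]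
  rw [Real.sqrt_mul (by positivity), Real.sqrt_sq ht]

lemma eucNorm_pos (u : Fin n → ℝ) (hu : ∀ i, 0 < u i) : 0 < eucNorm u := by
  have : (0:ℝ) < ∑ i, u i ^ 2 := by
    apply Finset.sum_pos (fun i _ => by have := hu i; positivity) univ_nonempty
  exact Real.sqrt_pos.mpr this

lemma row_bound (hZ : ∀ i j, i ≠ j → A i j ≤ 0) (ha : ∀ i, 0 < a i) (hΓ : 0 < Γ)
    (u : Fin n → ℝ) (hu : ∀ i, 0 < u i) (r0 : ℝ) (hr0 : r0 ≤ lamOf A Γ a u)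
    (p q : Fin n) (hpq : p ≠ q) :
    r0 * u p ≤ A p p * u p + A p q * u q + Γ * u p := by
  have h1 : r0 ≤ ratio A Γ a u p := le_trans hr0 (lamOf_le A Γ a u p)
  have h2 : r0 * u p ≤ phi A Γ a u p := by
    rw [ratio, le_div_iff₀ (hu p)] at h1; linarith
  have h3 : (A *ᵥ u) p ≤ A p p * u p + A p q * u q := by
    have : (A *ᵥ u) p = ∑ j, A p j * u j := rfl
    rw [this]
    have hsub : ({p, q} : Finset (Fin n)) ⊆ univ := subset_univ _
    have hsplit := Finset.sum_sdiff hsub (f := fun j => A p j * u j)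
    have hrest : ∑ j ∈ univ \ {p, q}, A p j * u j ≤ 0 := by
      apply Finset.sum_nonpos
      intro j hj
      rw [Finset.mem_sdiff] at hj
      have hjp : j ≠ p := fun h => hj.2 (by simp [h])
      have hApj : A p j ≤ 0 := hZ p j (fun h => hjp h.symm)
      exact mul_nonpos_of_nonpos_of_nonneg hApj (hu j).le
    rw [Finset.sum_pair hpq] at hsplit
    linarith
  have h4 : Γ * ((1 - 1 / (a p + u p ^ 2)) * u p) ≤ Γ * u p := by
    have hap := ha p
    have hup := hu p
    have hpos : 0 < a p + u p ^ 2 := by positivity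
    have hd : (0:ℝ) < 1 / (a p + u p ^ 2) := by positivity
    nlinarith [mul_pos (mul_pos hΓ hd) hup]
  have := h2
  rw [phi] at this
  linarith

variable {A Γ a} in
lemma uniform_pos (hZ : ∀ i j, i ≠ j → A i j ≤ 0)
    (hirr : ¬ ∃ S : Finset (Fin n), S.Nonempty ∧ S ≠ Finset.univ ∧
      ∀ i ∈ S, ∀ j ∉ S, A i j = 0)
    (ha : ∀ i, 0 < a i) (hΓ : 0 < Γ) (r0 : ℝ)
    (α D : ℝ) (hα : 0 < α) (hαle : ∀ p q, p ≠ q → A p q ≠ 0 → α ≤ -(A p q))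
    (hD : 0 < D) (hDge : ∀ p, A p p + Γ - r0 ≤ D) (hαD : α ≤ D) :
    ∀ k : ℕ, ∀ u : Fin n → ℝ, (∀ i, 0 < u i) → eucNorm u = 1 → r0 ≤ lamOf A Γ a u →
      min (k+1) n ≤ (univ.filter (fun i => (Real.sqrt n)⁻¹ * (α / D) ^ k ≤ u i)).card := by
  have hratio : 0 < α / D := div_pos hα hD
  have hratio1 : α / D ≤ 1 := (div_le_one hD).mpr hαD
  have hn : 0 < n := Nat.pos_of_ne_zero (NeZero.ne n)
  have hsn : (0:ℝ) < Real.sqrt n := Real.sqrt_pos.mpr (by exact_mod_cast hn)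
  intro k
  induction k with
  | zero =>
    intro u hu hnorm hr0
    have hsum : ∑ i, u i ^ 2 = 1 := (eucNorm_eq_one_iff u).mp hnorm
    have : ∃ i ∈ (univ : Finset (Fin n)), (1:ℝ)/n ≤ u i ^ 2 := by
      apply Finset.exists_le_of_sum_le univ_nonempty
      rw [hsum]
      rw [Finset.sum_const, Finset.card_univ, Fintype.card_fin]
      rw [nsmul_eq_mul]
      rw [mul_one_div]
      rw [div_self (by exact_mod_cast hn.ne' : (n:ℝ) ≠ 0)]
    obtain ⟨i, _, hi⟩ := this
    have hui : (Real.sqrt n)⁻¹ ≤ u i := by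
      have h1 : (Real.sqrt n)⁻¹ = Real.sqrt (1/n) := by
        rw [one_div, Real.sqrt_inv]
      have h2 : Real.sqrt (1/n) ≤ Real.sqrt (u i ^ 2) := Real.sqrt_le_sqrt hi
      rw [Real.sqrt_sq (hu i).le] at h2
      linarith [h1 ▸ h2]
    have hmem : i ∈ univ.filter (fun i => (Real.sqrt n)⁻¹ * (α / D) ^ 0 ≤ u i) := by
      simp only [Finset.mem_filter, Finset.mem_univ, true_and, pow_zero, mul_one]
      exact hui
    have hc : 1 ≤ (univ.filter (fun i => (Real.sqrt n)⁻¹ * (α / D) ^ 0 ≤ u i)).card :=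
      Finset.card_pos.mpr ⟨i, hmem⟩
    exact le_trans (Nat.min_le_left _ _) hc
  | succ k ih =>
    intro u hu hnorm hr0
    set T := univ.filter (fun i => (Real.sqrt n)⁻¹ * (α / D) ^ k ≤ u i) with hT
    set T' := univ.filter (fun i => (Real.sqrt n)⁻¹ * (α / D) ^ (k+1) ≤ u i) with hT'
    have hTT' : T ⊆ T' := by
      intro i hi
      simp only [hT, hT', Finset.mem_filter, Finset.mem_univ, true_and] at *
      calc (Real.sqrt n)⁻¹ * (α / D) ^ (k+1)
          ≤ (Real.sqrt n)⁻¹ * (α / D) ^ k := by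
            apply mul_le_mul_of_nonneg_left _ (by positivity)
            exact pow_le_pow_of_le_one hratio.le hratio1 (by omega)
        _ ≤ u i := hi
    have hcardT : min (k+1) n ≤ T.card := ih u hu hnorm hr0
    have h1min : 1 ≤ min (k+1) n := Nat.le_min.mpr ⟨by omega, hn⟩
    by_cases hTuniv : T = univ
    · have hT'univ : T' = univ := Finset.univ_subset_iff.mp (hTuniv ▸ hTT')
      rw [hT'univ, Finset.card_univ, Fintype.card_fin]
      exact Nat.min_le_right _ _
    · have hTne : T.Nonempty := Finset.card_pos.mp (by omega)
      have hTcard_lt : T.card < n := by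
        have := Finset.card_lt_card (Finset.ssubset_univ_iff.mpr hTuniv)
        simpa using this
      push_neg at hirr
      have hcompl_ne : (Tᶜ : Finset (Fin n)).Nonempty := by
        rw [← Finset.card_pos, Finset.card_compl, Fintype.card_fin]
        omega
      have hcompl_nuniv : (Tᶜ : Finset (Fin n)) ≠ univ := by
        intro h
        obtain ⟨x, hx⟩ := hTne
        have : x ∈ (Tᶜ : Finset (Fin n)) := h ▸ Finset.mem_univ x
        exact (Finset.mem_compl.mp this) hx
      obtain ⟨p, hp, q, hq, hApq⟩ := hirr Tᶜ hcompl_ne hcompl_nuniv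
      have hpT : p ∉ T := Finset.mem_compl.mp hp
      have hqT : q ∈ T := by
        by_contra h
        exact hq (Finset.mem_compl.mpr h)
      have hpq : p ≠ q := fun h => hpT (h ▸ hqT)
      have hεq : (Real.sqrt n)⁻¹ * (α / D) ^ k ≤ u q := by
        have := hqT
        simp only [hT, Finset.mem_filter, Finset.mem_univ, true_and] at this
        exact this
      -- row bound gives u p ≥ eps (k+1)
      have hrb := row_bound A Γ a hZ ha hΓ u hu r0 hr0 p q hpq
      have hαpq : α ≤ -(A p q) := hαle p q hpq hApq
      have hup : (Real.sqrt n)⁻¹ * (α / D) ^ (k+1) ≤ u p := by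
        have h1 : α * ((Real.sqrt n)⁻¹ * (α / D) ^ k) ≤ -(A p q) * u q := by
          apply mul_le_mul hαpq hεq (by positivity) (by linarith)
        have h2 : -(A p q) * u q ≤ (A p p + Γ - r0) * u p := by nlinarith
        have h3 : (A p p + Γ - r0) * u p ≤ D * u p := by
          apply mul_le_mul_of_nonneg_right (hDge p) (hu p).le
        have h4 : α * ((Real.sqrt n)⁻¹ * (α / D) ^ k) ≤ D * u p := by linarith
        rw [show (Real.sqrt n)⁻¹ * (α / D) ^ (k+1)
            = α * ((Real.sqrt n)⁻¹ * (α / D) ^ k) / D by ring]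
        rw [div_le_iff₀ hD]
        linarith [h4]
      have hpT' : p ∈ T' := by
        simp only [hT', Finset.mem_filter, Finset.mem_univ, true_and]
        exact hup
      have hcard : T.card + 1 ≤ T'.card := by
        have : insert p T ⊆ T' := by
          intro x hx
          rcases Finset.mem_insert.mp hx with h | h
          · exact h ▸ hpT'
          · exact hTT' h
        have h1 := Finset.card_le_card this
        rwa [Finset.card_insert_of_notMem hpT] at h1
      rcases Nat.lt_or_ge (k+1) n with h | h
      · have h1 : min (k+1) n = k+1 := Nat.min_eq_left (Nat.le_of_lt h)
        rw [h1] at hcardT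
        have h2 : k + 2 ≤ T'.card := by omega
        exact le_trans (Nat.min_le_left _ _) h2
      · have h1 : min (k+1) n = n := Nat.min_eq_right h
        rw [h1] at hcardT
        exact absurd hTcard_lt (by omega)

lemma lamOf_eq_inf' (u : Fin n → ℝ) :
    lamOf A Γ a u = Finset.univ.inf' univ_nonempty (ratio A Γ a u) := by
  apply le_antisymm
  · exact Finset.le_inf' _ _ (fun i _ => lamOf_le A Γ a u i)
  · obtain ⟨i, hi⟩ := lamOf_attained A Γ a u
    rw [hi]
    exact Finset.inf'_le _ (Finset.mem_univ i)

lemma continuousAt_phi (ha : ∀ i, 0 < a i) (i : Fin n) (x : Fin n → ℝ) :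
    ContinuousAt (fun u => phi A Γ a u i) x := by
  apply ContinuousAt.add
  · have : (fun u : Fin n → ℝ => (A *ᵥ u) i) = fun u => ∑ j, A i j * u j := rfl
    rw [this]
    exact (continuous_finset_sum _ (fun j _ =>
      (continuous_const.mul (continuous_apply j)))).continuousAt
  · apply ContinuousAt.mul continuousAt_const
    apply ContinuousAt.mul
    · apply ContinuousAt.sub continuousAt_const
      apply ContinuousAt.div continuousAt_const
      · exact (continuousAt_const.add ((continuous_apply i).continuousAt.pow 2))
      · have := ha i
        have : (0:ℝ) < a i + x i ^ 2 := by positivity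
        exact ne_of_gt this
    · exact (continuous_apply i).continuousAt

lemma continuousAt_ratio (ha : ∀ i, 0 < a i) (i : Fin n) (x : Fin n → ℝ) (hx : 0 < x i) :
    ContinuousAt (fun u => ratio A Γ a u i) x := by
  apply ContinuousAt.div (continuousAt_phi A Γ a ha i x)
    (continuous_apply i).continuousAt (ne_of_gt hx)

lemma continuousOn_lamOf (ha : ∀ i, 0 < a i) (δ : ℝ) (hδ : 0 < δ) :
    ContinuousOn (lamOf A Γ a) {u : Fin n → ℝ | ∀ i, δ ≤ u i} := by
  intro x hx
  apply ContinuousAt.continuousWithinAt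
  have : lamOf A Γ a = fun u => Finset.univ.inf' univ_nonempty (fun i => ratio A Γ a u i) := by
    funext u; exact lamOf_eq_inf' A Γ a u
  rw [this]
  exact ContinuousAt.finset_inf'_apply univ_nonempty
    (fun i _ => continuousAt_ratio A Γ a ha i x (lt_of_lt_of_le hδ (hx i)))

lemma continuous_eucNorm : Continuous (eucNorm (n := n)) := by
  unfold eucNorm
  exact Real.continuous_sqrt.comp (continuous_finset_sum _ (fun i _ =>
    (continuous_apply i).pow 2))

lemma isCompact_K (δ : ℝ) :
    IsCompact {u : Fin n → ℝ | eucNorm u = 1 ∧ ∀ i, δ ≤ u i} := by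
  apply Metric.isCompact_of_isClosed_isBounded
  · have h1 : IsClosed {u : Fin n → ℝ | eucNorm u = 1} :=
      isClosed_eq continuous_eucNorm continuous_const
    have h2 : IsClosed {u : Fin n → ℝ | ∀ i, δ ≤ u i} := by
      rw [Set.setOf_forall]
      exact isClosed_iInter (fun i => isClosed_le continuous_const (continuous_apply i))
    exact h1.inter h2
  · apply Bornology.IsBounded.subset (Metric.isBounded_closedBall (x := (0 : Fin n → ℝ)) (r := 1))
    intro u hu
    rw [Metric.mem_closedBall, dist_zero_right]
    rw [pi_norm_le_iff_of_nonneg zero_le_one]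
    intro i
    have hsum : ∑ j, u j ^ 2 = 1 := (eucNorm_eq_one_iff u).mp hu.1
    have h1 : u i ^ 2 ≤ 1 := by
      rw [← hsum]
      exact Finset.single_le_sum (fun j _ => sq_nonneg (u j)) (Finset.mem_univ i)
    rw [Real.norm_eq_abs, abs_le]
    constructor <;> nlinarith

variable {A Γ a} in
lemma improve (hZ : ∀ i j, i ≠ j → A i j ≤ 0) (ha : ∀ i, 0 < a i) (hΓ : 0 < Γ)
    (u : Fin n → ℝ) (hu : ∀ i, 0 < u i) (hnorm : eucNorm u = 1)
    (hne : ∃ i, phi A Γ a u i - lamOf A Γ a u * u i ≠ 0) :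
    ∃ v : Fin n → ℝ, (∀ i, 0 < v i) ∧ eucNorm v = 1 ∧ lamOf A Γ a u < lamOf A Γ a v := by
  set r := lamOf A Γ a u with hr
  set w : Fin n → ℝ := fun i => phi A Γ a u i - r * u i with hw
  have hw_nonneg : ∀ i, 0 ≤ w i := by
    intro i
    have h1 : r ≤ phi A Γ a u i / u i := lamOf_le A Γ a u i
    rw [le_div_iff₀ (hu i)] at h1
    simp only [hw]; linarith
  obtain ⟨i0, hi0⟩ := hne
  have hwi0 : 0 < w i0 := lt_of_le_of_ne (hw_nonneg i0) (Ne.symm hi0)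
  -- choose small ε > 0
  have hev : ∀ᶠ ε in nhds (0:ℝ), ∀ i,
      (0 < u i - ε * w i) ∧ (w i ≠ 0 → 0 < phi A Γ a (fun j => u j - ε * w j) i
        - r * (u i - ε * w i)) := by
    rw [Filter.eventually_all]
    intro i
    have hcv : Continuous (fun ε : ℝ => (fun j => u j - ε * w j)) := by
      apply continuous_pi
      intro j
      exact continuous_const.sub (continuous_id.mul continuous_const)
    have hc1 : ∀ᶠ ε in nhds (0:ℝ), 0 < u i - ε * w i := by
      have hg : Continuous (fun ε : ℝ => u i - ε * w i) :=
        continuous_const.sub (continuous_id.mul continuous_const)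
      have h0 : (0:ℝ) < u i - 0 * w i := by simpa using hu i
      have := hg.continuousAt (x := (0:ℝ)) (Ioi_mem_nhds h0)
      exact this
    by_cases hwi : w i = 0
    · filter_upwards [hc1] with ε hε
      exact ⟨hε, fun h => absurd hwi h⟩
    · have hg : ContinuousAt (fun ε : ℝ =>
          phi A Γ a (fun j => u j - ε * w j) i - r * (u i - ε * w i)) 0 := by
        apply ContinuousAt.sub
        · exact (continuousAt_phi A Γ a ha i _).comp hcv.continuousAt
        · exact (continuous_const.mul (continuous_const.sub
            (continuous_id.mul continuous_const))).continuousAt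
      have h0 : (0:ℝ) < phi A Γ a (fun j => u j - 0 * w j) i - r * (u i - 0 * w i) := by
        have : (fun j => u j - 0 * w j) = u := by funext j; ring_nf
        rw [this]
        have := hwi0
        have h2 := lt_of_le_of_ne (hw_nonneg i) (Ne.symm hwi)
        simp only [hw] at h2
        simpa using h2
      have h2 := hg (Ioi_mem_nhds h0)
      have h3 : ∀ᶠ ε in nhds (0:ℝ), 0 < phi A Γ a (fun j => u j - ε * w j) i
          - r * (u i - ε * w i) := by
        exact h2
      filter_upwards [hc1, h3] with ε h1 h2
      exact ⟨h1, fun _ => h2⟩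
  obtain ⟨ε, hε_pos, hε⟩ : ∃ ε : ℝ, 0 < ε ∧ ∀ i,
      (0 < u i - ε * w i) ∧ (w i ≠ 0 → 0 < phi A Γ a (fun j => u j - ε * w j) i
        - r * (u i - ε * w i)) := by
    have h1 : ∀ᶠ ε in nhdsWithin (0:ℝ) (Set.Ioi 0), ∀ i,
        (0 < u i - ε * w i) ∧ (w i ≠ 0 → 0 < phi A Γ a (fun j => u j - ε * w j) i
          - r * (u i - ε * w i)) := nhdsWithin_le_nhds hev
    have h2 : ∀ᶠ ε in nhdsWithin (0:ℝ) (Set.Ioi 0), (0:ℝ) < ε :=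
      eventually_mem_nhdsWithin.mono (fun x hx => hx)
    obtain ⟨ε, h3, h4⟩ := (h2.and h1).exists
    exact ⟨ε, h3, h4⟩
  set v : Fin n → ℝ := fun j => u j - ε * w j with hv
  have hv_pos : ∀ i, 0 < v i := fun i => (hε i).1
  have hv_eq : v = u - ε • w := by funext j; simp [hv, smul_eq_mul]
  have hAv : ∀ i, (A *ᵥ v) i = (A *ᵥ u) i - ε * (A *ᵥ w) i := by
    intro i
    rw [hv_eq, Matrix.mulVec_sub, Matrix.mulVec_smul]
    simp [smul_eq_mul]
  have hres : ∀ i, r * v i ≤ phi A Γ a v i := by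
    intro i
    by_cases hwi : w i = 0
    · have hvi : v i = u i := by simp [hv, hwi]
      have hAw : (A *ᵥ w) i ≤ 0 := by
        have : (A *ᵥ w) i = ∑ j, A i j * w j := rfl
        rw [this]
        apply Finset.sum_nonpos
        intro j _
        by_cases hji : j = i
        · rw [hji, hwi]; simp
        · exact mul_nonpos_of_nonpos_of_nonneg (hZ i j (fun h => hji h.symm)) (hw_nonneg j)
      have hphi : phi A Γ a v i = phi A Γ a u i - ε * (A *ᵥ w) i := by
        unfold phi
        rw [hAv i, hvi]
        ring
      have hwieq : phi A Γ a u i = r * u i := by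
        have : w i = 0 := hwi
        simp only [hw] at this
        linarith
      rw [hphi, hwieq, hvi]
      nlinarith
    · have := (hε i).2 hwi
      simp only [hv]
      linarith
  have hrv : r ≤ lamOf A Γ a v := by
    apply le_lamOf
    intro i
    rw [ratio, le_div_iff₀ (hv_pos i)]
    exact hres i
  -- norm strictly decreased
  have hsum_lt : ∑ i, v i ^ 2 < 1 := by
    have hsum : ∑ i, u i ^ 2 = 1 := (eucNorm_eq_one_iff u).mp hnorm
    rw [← hsum]
    apply Finset.sum_lt_sum
    · intro i _
      have h1 : v i ≤ u i := by
        simp only [hv]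
        nlinarith [hw_nonneg i, hε_pos]
      exact pow_le_pow_left₀ (hv_pos i).le h1 2
    · refine ⟨i0, Finset.mem_univ i0, ?_⟩
      have h1 : v i0 < u i0 := by
        simp only [hv]
        nlinarith
      have := hv_pos i0
      nlinarith
  have hevn : 0 < eucNorm v := eucNorm_pos v hv_pos
  have hevn1 : eucNorm v < 1 := by
    rw [eucNorm]
    rw [show (1:ℝ) = Real.sqrt 1 by simp]
    exact Real.sqrt_lt_sqrt (Finset.sum_nonneg (fun i _ => sq_nonneg _)) hsum_lt
  set t : ℝ := (eucNorm v)⁻¹ with ht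
  have ht1 : 1 < t := by
    rw [ht]
    exact one_lt_inv₀ hevn |>.mpr hevn1
  refine ⟨t • v, fun i => ?_, ?_, ?_⟩
  · have := hv_pos i
    have ht0 : 0 < t := by positivity
    simp only [Pi.smul_apply, smul_eq_mul]
    positivity
  · rw [eucNorm_smul t (by positivity) v, ht, inv_mul_cancel₀ (ne_of_gt hevn)]
  · calc lamOf A Γ a u = r := rfl
      _ ≤ lamOf A Γ a v := hrv
      _ < lamOf A Γ a (t • v) := lamOf_smul_lt A Γ a ha hΓ v hv_pos t ht1
end dev

theorem stmt_17' {n : ℕ} [NeZero n] (A : Matrix (Fin n) (Fin n) ℝ) (a : Fin n → ℝ) (Γ : ℝ)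
    (ha : ∀ i, 0 < a i) (hΓ : 0 < Γ)
    (hZ : ∀ i j, i ≠ j → A i j ≤ 0)
    (hirr : ¬ ∃ S : Finset (Fin n), S.Nonempty ∧ S ≠ Finset.univ ∧
      ∀ i ∈ S, ∀ j ∉ S, A i j = 0) :
    ∃ (lam : ℝ) (u : Fin n → ℝ),
      (∀ i, 0 < u i) ∧ eucNorm u = 1 ∧ calA A Γ a u *ᵥ u = lam • u := by
  have hn : 0 < n := Nat.pos_of_ne_zero (NeZero.ne n)
  have hsn : (0:ℝ) < Real.sqrt n := Real.sqrt_pos.mpr (by exact_mod_cast hn)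
  -- α : uniform lower bound on -(off-diagonal nonzero entries)
  obtain ⟨α, hα, hαle⟩ : ∃ α : ℝ, 0 < α ∧ ∀ p q, p ≠ q → A p q ≠ 0 → α ≤ -(A p q) := by
    set s := Finset.univ.filter (fun p : Fin n × Fin n => p.1 ≠ p.2 ∧ A p.1 p.2 ≠ 0) with hs
    by_cases hsne : s.Nonempty
    · refine ⟨s.inf' hsne (fun p => -(A p.1 p.2)), ?_, ?_⟩
      · rw [Finset.lt_inf'_iff]
        intro p hp
        rw [hs, Finset.mem_filter] at hp
        have h1 := hZ p.1 p.2 hp.2.1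
        have h2 := hp.2.2
        cases lt_or_eq_of_le h1 with
        | inl h => linarith
        | inr h => exact absurd h h2
      · intro p q hpq hApq
        exact Finset.inf'_le _ (show (p,q) ∈ s by
          rw [hs, Finset.mem_filter]; exact ⟨Finset.mem_univ _, hpq, hApq⟩)
    · refine ⟨1, one_pos, fun p q hpq hApq => ?_⟩
      exact absurd (Finset.mem_filter.mpr ⟨Finset.mem_univ (p,q), hpq, hApq⟩)
        (fun h => hsne ⟨(p,q), h⟩)
  -- base point u0
  set u0 : Fin n → ℝ := fun _ => (Real.sqrt n)⁻¹ with hu0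
  have hu0_pos : ∀ i, 0 < u0 i := fun i => by positivity
  have hu0_norm : eucNorm u0 = 1 := by
    rw [eucNorm_eq_one_iff]
    have h1 : ∀ i : Fin n, u0 i ^ 2 = (n : ℝ)⁻¹ := by
      intro i
      rw [hu0]
      rw [show ((Real.sqrt n)⁻¹ : ℝ) ^ 2 = ((Real.sqrt n) ^ 2)⁻¹ by rw [inv_pow]]
      rw [Real.sq_sqrt (by positivity)]
    rw [Finset.sum_congr rfl (fun i _ => h1 i)]
    rw [Finset.sum_const, Finset.card_univ, Fintype.card_fin, nsmul_eq_mul]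
    rw [mul_inv_cancel₀ (by exact_mod_cast hn.ne' : (n:ℝ) ≠ 0)]
  set r0 : ℝ := lamOf A Γ a u0 with hr0
  -- D
  set D : ℝ := max (Finset.univ.sup' univ_nonempty (fun i => A i i) + Γ - r0) α + 1 with hD
  have hD_pos : 0 < D := by
    have : α ≤ max (Finset.univ.sup' univ_nonempty (fun i => A i i) + Γ - r0) α :=
      le_max_right _ _
    rw [hD]; linarith
  have hαD : α ≤ D := by
    have : α ≤ max (Finset.univ.sup' univ_nonempty (fun i => A i i) + Γ - r0) α :=
      le_max_right _ _
    rw [hD]; linarith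
  have hDge : ∀ p, A p p + Γ - r0 ≤ D := by
    intro p
    have h1 : A p p ≤ Finset.univ.sup' univ_nonempty (fun i => A i i) :=
      Finset.le_sup' (f := fun i => A i i) (Finset.mem_univ p)
    have h2 : Finset.univ.sup' univ_nonempty (fun i => A i i) + Γ - r0
        ≤ max (Finset.univ.sup' univ_nonempty (fun i => A i i) + Γ - r0) α := le_max_left _ _
    rw [hD]; linarith
  -- δ
  set δ : ℝ := (Real.sqrt n)⁻¹ * (α / D) ^ (n - 1) with hδdef
  have hδ_pos : 0 < δ := by rw [hδdef]; positivity
  -- key: near-optimal vectors are ≥ δ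
  have key : ∀ u : Fin n → ℝ, (∀ i, 0 < u i) → eucNorm u = 1 → r0 ≤ lamOf A Γ a u →
      ∀ i, δ ≤ u i := by
    intro u hu hnorm hr
    have h1 := uniform_pos hZ hirr ha hΓ r0 α D hα hαle hD_pos hDge hαD (n-1) u hu hnorm hr
    have h2 : min (n - 1 + 1) n = n := by omega
    rw [h2] at h1
    have h3 : (univ.filter (fun i => (Real.sqrt n)⁻¹ * (α / D) ^ (n-1) ≤ u i)) = univ := by
      apply Finset.eq_univ_of_card
      have h4 := Finset.card_le_card
        (Finset.subset_univ (univ.filter (fun i => (Real.sqrt n)⁻¹ * (α / D) ^ (n-1) ≤ u i)))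
      rw [Finset.card_univ, Fintype.card_fin] at *
      omega
    intro i
    have := Finset.eq_univ_iff_forall.mp h3 i
    rw [Finset.mem_filter] at this
    rw [hδdef]
    exact this.2
  -- compact set and maximizer
  set K : Set (Fin n → ℝ) := {u | eucNorm u = 1 ∧ ∀ i, δ ≤ u i} with hK
  have hu0K : u0 ∈ K := by
    refine ⟨hu0_norm, fun i => ?_⟩
    rw [hδdef, hu0]
    have h1 : (α / D) ^ (n-1) ≤ 1 := by
      apply pow_le_one₀ (by positivity)
      rw [div_le_one hD_pos]; exact hαD
    nlinarith [inv_pos.mpr hsn]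
  obtain ⟨ustar, hustarK, hmax⟩ := (isCompact_K (n := n) δ).exists_isMaxOn ⟨u0, hu0K⟩
    ((continuousOn_lamOf A Γ a ha δ hδ_pos).mono (fun u hu => hu.2))
  have hustar_pos : ∀ i, 0 < ustar i := fun i => lt_of_lt_of_le hδ_pos (hustarK.2 i)
  have hustar_norm : eucNorm ustar = 1 := hustarK.1
  have hstar_ge : r0 ≤ lamOf A Γ a ustar := hmax hu0K
  -- residual must vanish
  have hres : ∀ i, phi A Γ a ustar i - lamOf A Γ a ustar * ustar i = 0 := by
    by_contra hcon
    push_neg at hcon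
    obtain ⟨v, hv_pos, hv_norm, hv_gt⟩ := improve hZ ha hΓ ustar hustar_pos hustar_norm hcon
    have hvK : v ∈ K := ⟨hv_norm, key v hv_pos hv_norm (le_trans hstar_ge hv_gt.le)⟩
    exact absurd (hmax hvK) (not_le.mpr hv_gt)
  refine ⟨lamOf A Γ a ustar, ustar, hustar_pos, hustar_norm, ?_⟩
  funext i
  rw [calA_mulVec]
  have := hres i
  simp only [Pi.smul_apply, smul_eq_mul]
  linarith

theorem stmt_17 {n : ℕ} [NeZero n] (A : Matrix (Fin n) (Fin n) ℝ) (a : Fin n → ℝ) (Γ : ℝ)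
    (ha : ∀ i, 0 < a i) (hΓ : 0 < Γ)
    (hA : IsNonsingularM A) (hAirr : IsIrreducibleMat A) :
    ∃ (lam : ℝ) (u : Fin n → ℝ),
      (∀ i, 0 < u i) ∧ eucNorm u = 1 ∧ calA A Γ a u *ᵥ u = lam • u := by
  exact stmt_17' A a Γ ha hΓ hA.1 hAirr
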